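/- arXiv:1805.06258 — 2 statements merged into one kernel-verified Lean document; each statement's English description precedes it below -/
import Mathlib

section
/- Let H be a real Hilbert space, let v₁,…,vₘ ∈ H, let V be the subspace spanned by v₁,…,vₘ, and let P_V denote the orthogonal projection of H onto V. Let Φ : ℝ^m → ℝ be any function, let ν > 0, and define G : H → ℝ by G(f) = Φ(⟪v₁,f⟫,…,⟪vₘ,f⟫) + ν‖f‖². Then for every f ∈ H with f ∉ V one has the strict inequality G(P_V f) < G(f). -/
open scoped RealInnerProductSpace

/-- For `G f = Φ(⟪v₁,f⟫,…,⟪vₘ,f⟫) + ν‖f‖²` with `ν > 0` and `V = span{v₁,…,vₘ}`,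
orthogonal projection onto `V` strictly decreases `G` for any `f ∉ V`. -/
theorem stmt_1 {H : Type*} [NormedAddCommGroup H] [InnerProductSpace ℝ H] [CompleteSpace H]
    {m : ℕ} (v : Fin m → H) (Φ : (Fin m → ℝ) → ℝ) (ν : ℝ) (hν : 0 < ν)
    (G : H → ℝ) (hG : ∀ f, G f = Φ (fun i => ⟪v i, f⟫) + ν * ‖f‖ ^ 2)
    (f : H) (hf : f ∉ Submodule.span ℝ (Set.range v)) :
    haveI : FiniteDimensional ℝ (Submodule.span ℝ (Set.range v)) :=
      FiniteDimensional.span_of_finite ℝ (Set.finite_range v)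
    G (Submodule.orthogonalProjectionOnto (Submodule.span ℝ (Set.range v)) f : H) < G f := by
  haveI : FiniteDimensional ℝ (Submodule.span ℝ (Set.range v)) :=
    FiniteDimensional.span_of_finite ℝ (Set.finite_range v)
  set V := Submodule.span ℝ (Set.range v)
  set p : H := (Submodule.orthogonalProjectionOnto V f : H) with hp
  have hinner : ∀ i, ⟪v i, p⟫ = ⟪v i, f⟫ := by
    intro i
    have hvi : v i ∈ V := Submodule.subset_span ⟨i, rfl⟩
    have h0 : ⟪f - p, v i⟫ = 0 := Submodule.starProjection_inner_eq_zero f (v i) hvi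
    rw [inner_sub_left] at h0
    have := real_inner_comm (v i) p
    have := real_inner_comm (v i) f
    linarith [real_inner_comm p (v i), real_inner_comm f (v i)]
  have hne : f - p ≠ 0 := by
    intro h
    apply hf
    have : f = p := by rwa [sub_eq_zero] at h
    rw [this]
    exact (Submodule.orthogonalProjectionOnto V f).2
  have hnorm : ‖p‖ ^ 2 < ‖f‖ ^ 2 := by
    have hpyth : ‖f‖ ^ 2 = ‖p‖ ^ 2 + ‖(Submodule.orthogonalProjectionOnto Vᗮ f : H)‖ ^ 2 :=
      Submodule.norm_sq_eq_add_norm_sq_projection f V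
    have hsub : (Submodule.orthogonalProjectionOnto Vᗮ f : H) = f - p := by
      have := Submodule.starProjection_add_starProjection_orthogonal (K := V) f
      exact eq_sub_of_add_eq' this
    have hpos : 0 < ‖(Submodule.orthogonalProjectionOnto Vᗮ f : H)‖ ^ 2 := by
      rw [hsub]
      exact pow_pos (norm_pos_iff.mpr hne) 2
    linarith
  rw [hG, hG]
  have : (fun i => ⟪v i, p⟫) = fun i => ⟪v i, f⟫ := funext hinner
  rw [this]
  have := mul_lt_mul_of_pos_left hnorm hν
  linarith
end

section
/- Let m ∈ ℕ, let E = ℝ^m with the Euclidean norm ‖·‖, let v ∈ E, let τ > 0, κ > 0, n > 0 be real numbers and let μ ∈ [0,1]. Then the point x* = (1/(2τ(1−μ)/(κn) + 1)) · max(0, 1 − τμ/(κ·√n·‖v‖)) · v (interpreted as x* = 0 when v = 0) is the unique minimizer over E of the function x ↦ (τμ/√n)·‖x‖ + (τ(1−μ)/n)·‖x‖² + (κ/2)·‖x − v‖²; that is, for every x ∈ E the objective at x* is at most the objective at x, with equality only when x = x*. -/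
lemma key_real (a b c s N V I : ℝ) (ha : 0 ≤ a) (hb : 0 ≤ b) (hc : 0 < c)
    (hN : 0 ≤ N) (hV : 0 ≤ V) (hI : I ≤ N * V) (hI' : -(N * V) ≤ I)
    (hs : s = 1 / (2 * b / c + 1) * max 0 (1 - a / (c * V))) :
    a * (s * V) + b * (s * V) ^ 2 + c / 2 * ((s - 1) ^ 2 * V ^ 2)
      + (b + c / 2) * (N ^ 2 - 2 * (s * I) + s ^ 2 * V ^ 2)
      ≤ a * N + b * N ^ 2 + c / 2 * (N ^ 2 - 2 * I + V ^ 2) := by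
  have hden : (0:ℝ) < 2 * b / c + 1 := by positivity
  rcases eq_or_lt_of_le hV with hV0 | hV'
  · subst hV0
    have hI0 : I = 0 := by nlinarith
    subst hI0
    nlinarith [mul_nonneg ha hN]
  · by_cases hca : c * V ≤ a
    · have hmax : max 0 (1 - a / (c * V)) = 0 := by
        have : a / (c * V) ≥ 1 := (le_div_iff₀ (by positivity)).2 (by linarith)
        simp [max_eq_left]; linarith
      have hs0 : s = 0 := by rw [hs, hmax]; ring
      subst hs0
      nlinarith [mul_le_mul_of_nonneg_left hI hc.le, mul_le_mul_of_nonneg_left hca hN]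
    · push_neg at hca
      have hmax : max 0 (1 - a / (c * V)) = 1 - a / (c * V) := by
        have : a / (c * V) < 1 := (div_lt_one (by positivity)).2 hca
        exact max_eq_right (by linarith)
      have hsV : (2 * b + c) * (s * V) = c * V - a := by
        rw [hs, hmax]
        field_simp
      have hdiff : V * ((a * N + b * N ^ 2 + c / 2 * (N ^ 2 - 2 * I + V ^ 2))
          - (a * (s * V) + b * (s * V) ^ 2 + c / 2 * ((s - 1) ^ 2 * V ^ 2)
            + (b + c / 2) * (N ^ 2 - 2 * (s * I) + s ^ 2 * V ^ 2)))
          = a * (N * V - I) := by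
        linear_combination (I - s * V ^ 2) * hsV
      nlinarith [mul_nonneg ha (sub_nonneg.2 hI), hdiff]

/-- closed form of the `ℛᴱᴺ` (elastic-net) proximal step: the unique minimizer of
`x ↦ (τμ/√n)‖x‖ + (τ(1−μ)/n)‖x‖² + (κ/2)‖x − v‖²` on `ℝ^m` is a scaled soft-thresholding of `v`. -/
theorem stmt_5 {m : ℕ} (v : EuclideanSpace ℝ (Fin m))
    (τ κ n μ : ℝ) (hτ : 0 < τ) (hκ : 0 < κ) (hn : 0 < n) (hμ : μ ∈ Set.Icc (0:ℝ) 1) :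
    let xstar : EuclideanSpace ℝ (Fin m) :=
      (1 / (2 * τ * (1 - μ) / (κ * n) + 1) * max 0 (1 - τ * μ / (κ * Real.sqrt n * ‖v‖))) • v
    (∀ x : EuclideanSpace ℝ (Fin m),
        τ * μ / Real.sqrt n * ‖xstar‖ + τ * (1 - μ) / n * ‖xstar‖ ^ 2
            + κ / 2 * ‖xstar - v‖ ^ 2 ≤
          τ * μ / Real.sqrt n * ‖x‖ + τ * (1 - μ) / n * ‖x‖ ^ 2
            + κ / 2 * ‖x - v‖ ^ 2) ∧
    (∀ x : EuclideanSpace ℝ (Fin m),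
        τ * μ / Real.sqrt n * ‖xstar‖ + τ * (1 - μ) / n * ‖xstar‖ ^ 2
            + κ / 2 * ‖xstar - v‖ ^ 2 =
          τ * μ / Real.sqrt n * ‖x‖ + τ * (1 - μ) / n * ‖x‖ ^ 2
            + κ / 2 * ‖x - v‖ ^ 2 → x = xstar) := by
  intro xstar
  have hsq : (0:ℝ) < Real.sqrt n := Real.sqrt_pos.2 hn
  set a : ℝ := τ * μ / Real.sqrt n with ha_def
  set b : ℝ := τ * (1 - μ) / n with hb_def
  have ha : 0 ≤ a := by
    have := hμ.1
    positivity
  have hb : 0 ≤ b := by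
    have h1 : 0 ≤ 1 - μ := by linarith [hμ.2]
    positivity
  set s : ℝ := 1 / (2 * τ * (1 - μ) / (κ * n) + 1) *
      max 0 (1 - τ * μ / (κ * Real.sqrt n * ‖v‖)) with hs_def
  have hs_eq : s = 1 / (2 * b / κ + 1) * max 0 (1 - a / (κ * ‖v‖)) := by
    have e1 : 2 * τ * (1 - μ) / (κ * n) + 1 = 2 * b / κ + 1 := by rw [hb_def]; ring
    have e2 : τ * μ / (κ * Real.sqrt n * ‖v‖) = a / (κ * ‖v‖) := by rw [ha_def]; ring
    rw [hs_def, e1, e2]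
  have hs_nonneg : 0 ≤ s := by
    rw [hs_eq]
    have h1 : (0:ℝ) < 2 * b / κ + 1 := by positivity
    exact mul_nonneg (by positivity) (le_max_left _ _)
  have hxstar : xstar = s • v := rfl
  -- key pointwise bound
  have key : ∀ x : EuclideanSpace ℝ (Fin m),
      a * ‖xstar‖ + b * ‖xstar‖ ^ 2 + κ / 2 * ‖xstar - v‖ ^ 2
        + (b + κ / 2) * ‖x - xstar‖ ^ 2
      ≤ a * ‖x‖ + b * ‖x‖ ^ 2 + κ / 2 * ‖x - v‖ ^ 2 := by
    intro x
    have hIcs := abs_real_inner_le_norm x v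
    have hI : inner ℝ x v ≤ ‖x‖ * ‖v‖ := (abs_le.1 hIcs).2
    have hI' : -(‖x‖ * ‖v‖) ≤ inner ℝ x v := (abs_le.1 hIcs).1
    have h1 : ‖xstar‖ = s * ‖v‖ := by
      rw [hxstar, norm_smul, Real.norm_eq_abs, abs_of_nonneg hs_nonneg]
    have h2 : ‖xstar - v‖ ^ 2 = (s - 1) ^ 2 * ‖v‖ ^ 2 := by
      have : xstar - v = (s - 1) • v := by rw [hxstar, sub_smul, one_smul]
      rw [this, norm_smul, Real.norm_eq_abs, mul_pow, sq_abs]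
    have h3 : ‖x - xstar‖ ^ 2 = ‖x‖ ^ 2 - 2 * (s * inner ℝ x v) + s ^ 2 * ‖v‖ ^ 2 := by
      rw [hxstar, norm_sub_sq_real, real_inner_smul_right, norm_smul,
        Real.norm_eq_abs, mul_pow, sq_abs]
    have h4 : ‖x - v‖ ^ 2 = ‖x‖ ^ 2 - 2 * inner ℝ x v + ‖v‖ ^ 2 := norm_sub_sq_real x v
    rw [h1, h2, h3, h4]
    exact key_real a b κ s ‖x‖ ‖v‖ (inner ℝ x v) ha hb hκ (norm_nonneg x)
      (norm_nonneg v) hI hI' hs_eq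
  have hbc : (0:ℝ) < b + κ / 2 := by positivity
  constructor
  · intro x
    have := key x
    nlinarith [sq_nonneg ‖x - xstar‖, mul_nonneg hbc.le (sq_nonneg ‖x - xstar‖)]
  · intro x hx
    have hk := key x
    have h0 : ‖x - xstar‖ ^ 2 ≤ 0 := by nlinarith
    have : ‖x - xstar‖ = 0 := by nlinarith [sq_nonneg ‖x - xstar‖, norm_nonneg (x - xstar)]
    exact sub_eq_zero.1 (norm_eq_zero.1 this)
end
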